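/- Let X be a set, F : X → X a map, γ : X → ℝ, and s_n(x) = ∑_{k=0}^{n} γ(F^k x). Let Λ be a set of real sequences (η_n)_{n≥0} containing all sequences (−s_n(x))_{n≥0}, x ∈ X, such that Λ is invariant under the shift (η_n) ↦ (η_{n+1}) and under all translations (η_n) ↦ (η_n + c) for c ∈ ℝ. Let ω : Λ → ℝ satisfy ω[(η_{n+1})] = ω[(η_n)] and ω[(η_n + c)] = ω[(η_n)] + c for all sequences in Λ and c ∈ ℝ. Then φ(x) = ω[(−s_n(x))_{n≥0}] satisfies the cohomological equation φ(F x) − φ(x) = γ(x) for all x ∈ X. -/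
import Mathlib


/-- A resolving functional yields a solution of the cohomological equation:
if `Λ` is a set of real sequences containing all `(−s_n(x))`, invariant under the shift
and under translations, and `ω` is shift invariant and translation covariant on `Λ`,
then `φ(x) = ω[(−s_n(x))]` solves `φ(F x) − φ(x) = γ(x)`. -/
theorem resolving_functional_solves
    {X : Type*} (F : X → X) (γ : X → ℝ)
    (Λ : Set (ℕ → ℝ))
    (hΛmem : ∀ x : X, (fun n => -(∑ k ∈ Finset.range (n + 1), γ (F^[k] x))) ∈ Λ)
    (hΛshift : ∀ η ∈ Λ, (fun n => η (n + 1)) ∈ Λ)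
    (hΛtrans : ∀ η ∈ Λ, ∀ c : ℝ, (fun n => η n + c) ∈ Λ)
    (ω : (ℕ → ℝ) → ℝ)
    (hωshift : ∀ η ∈ Λ, ω (fun n => η (n + 1)) = ω η)
    (hωtrans : ∀ η ∈ Λ, ∀ c : ℝ, ω (fun n => η n + c) = ω η + c) :
    ∀ x : X,
      ω (fun n => -(∑ k ∈ Finset.range (n + 1), γ (F^[k] (F x)))) -
      ω (fun n => -(∑ k ∈ Finset.range (n + 1), γ (F^[k] x))) = γ x := by
  intro x
  set η : ℕ → ℝ := fun n => -(∑ k ∈ Finset.range (n + 1), γ (F^[k] x)) with hη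
  have hmem : η ∈ Λ := hΛmem x
  have key : (fun n => -(∑ k ∈ Finset.range (n + 1), γ (F^[k] (F x))))
      = fun n => η (n + 1) + γ x := by
    funext n
    have : ∑ k ∈ Finset.range (n + 2), γ (F^[k] x)
        = (∑ k ∈ Finset.range (n + 1), γ (F^[k] (F x))) + γ x := by
      rw [Finset.sum_range_succ' (fun k => γ (F^[k] x)) (n + 1)]
      simp [Function.iterate_succ_apply]
    simp only [hη]
    rw [this]
    ring
  rw [key, hωtrans _ (hΛshift η hmem) (γ x), hωshift η hmem]
  ring
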